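/- Let b ∈ S((ℤ^n)^p) be a Schwartz sequence, P_j a homogeneous polynomial of degree j on ℝ^n, r ∈ ℕ, φ a real-valued function on ℤ^n × (ℤ^n)^p, and define h(s,k,l) := b(l)P_j(k)e^{iφ(k,l)}/(|k|^{s+r}|k+ĺ_1|²⋯|k+ĺ_p|²) (set to 0 when some denominator vanishes for k ≠ 0). Then for all s ∈ ℂ with Re(s) > n + j − r − 2p, the double series Σ'_{(k,l)} h(s,k,l) over k ∈ ℤ^n \ {0} and l ∈ (ℤ^n)^p is absolutely summable; in particular the order of summation over k and l may be interchanged. -/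

import Mathlib

open scoped BigOperators

/-- Euclidean norm of an integer vector. -/
noncomputable def znorm {n : ℕ} (k : Fin n → ℤ) : ℝ :=
  Real.sqrt (∑ i, ((k i : ℝ)) ^ 2)

/-- The summand `h(s,k,l) = b(l) P_j(k) e^{iφ(k,l)} / (|k|^{s+r} |k+ĺ_1|²⋯|k+ĺ_p|²)`,
set to `0` when `k = 0` or some denominator vanishes. -/
noncomputable def hker {n p : ℕ} (b : (Fin p → Fin n → ℤ) → ℂ)
    (Pj : MvPolynomial (Fin n) ℝ) (r : ℕ)
    (φ : (Fin n → ℤ) → (Fin p → Fin n → ℤ) → ℝ)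
    (s : ℂ) (k : Fin n → ℤ) (l : Fin p → Fin n → ℤ) : ℂ :=
  if k = 0 ∨ ∃ i : Fin p, k + ∑ a ∈ Finset.Iic i, l a = 0 then 0
  else b l * ((MvPolynomial.eval (fun i => ((k i : ℤ) : ℝ)) Pj : ℝ) : ℂ)
        * Complex.exp (Complex.I * ((φ k l : ℝ) : ℂ))
        / ((znorm k : ℂ) ^ (s + (r : ℂ))
            * ∏ i : Fin p, (znorm (k + ∑ a ∈ Finset.Iic i, l a) : ℂ) ^ 2)

lemma aux_onedim {c : ℝ} (hc : 1/2 < c) :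
    Summable fun m : ℤ => ((1:ℝ) + (m:ℝ)^2) ^ (-c) := by
  have hmaj : Summable fun m : ℤ => |(m:ℝ)| ^ (-(2*c)) + (if m = 0 then (1:ℝ) else 0) := by
    refine (Real.summable_abs_int_rpow (by linarith)).add ?_
    exact summable_of_ne_finset_zero (s := {0}) (by intro m hm; simp at hm ⊢; exact fun h => absurd h hm)
  refine Summable.of_nonneg_of_le (fun m => Real.rpow_nonneg (by positivity) _) (fun m => ?_) hmaj
  rcases eq_or_ne m 0 with rfl | hm
  · simpa using Real.rpow_nonneg (le_refl (0:ℝ)) (-(2*c))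
  · have habs : (1:ℝ) ≤ |(m:ℝ)| := by
      have := Int.one_le_abs (by simpa using hm)
      calc (1:ℝ) ≤ (|m| : ℤ) := by exact_mod_cast this
        _ = |(m:ℝ)| := by push_cast; ring
    have h1 : (1:ℝ) ≤ (m:ℝ)^2 := by nlinarith [sq_abs (m:ℝ), sq_nonneg (|(m:ℝ)| - 1)]
    have key : ((1:ℝ) + (m:ℝ)^2) ^ (-c) ≤ ((m:ℝ)^2) ^ (-c) :=
      Real.rpow_le_rpow_of_nonpos (by linarith) (by linarith) (by linarith)
    calc ((1:ℝ) + (m:ℝ)^2) ^ (-c) ≤ ((m:ℝ)^2) ^ (-c) := key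
      _ = |(m:ℝ)| ^ (-(2*c)) := by
          rw [← sq_abs, ← Real.rpow_natCast |(m:ℝ)| 2, ← Real.rpow_mul (abs_nonneg _)]
          ring_nf
      _ ≤ _ := by simp [hm]

lemma aux_prod {α : Type*} {f : α → ℝ} (hf : Summable f) (h0 : ∀ a, 0 ≤ f a) :
    ∀ N : ℕ, Summable fun x : Fin N → α => ∏ i, f (x i) := by
  intro N
  induction N with
  | zero =>
      haveI : Subsingleton (Fin 0 → α) := ⟨fun a b => funext fun i => i.elim0⟩
      haveI : Finite (Fin 0 → α) := Finite.of_subsingleton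
      exact Summable.of_finite
  | succ N ih =>
      have hsum : Summable fun q : α × (Fin N → α) => f q.1 * ∏ i, f (q.2 i) :=
        Summable.mul_of_nonneg (g := fun x : Fin N → α => ∏ i, f (x i)) hf ih
          h0 (fun x => Finset.prod_nonneg fun i _ => h0 _)
      have he := (Fin.consEquiv fun _ => α).symm.summable_iff
        (f := fun q : α × (Fin N → α) => f q.1 * ∏ i, f (q.2 i))
      rw [← he] at hsum
      refine hsum.congr fun x => ?_
      simp [Fin.consEquiv, Fin.prod_univ_succ, Fin.tail]

lemma aux_bound {N : ℕ} (hN : 0 < N) (q : Fin N → ℝ) (hq : ∀ i, 0 ≤ q i) {t : ℝ} (ht : 0 ≤ t) :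
    ((1:ℝ) + ∑ i, q i) ^ (-t) ≤ ∏ i, ((1:ℝ) + q i) ^ (-(t/N)) := by
  have h1 : ∀ i, (1:ℝ) + q i ≤ 1 + ∑ i, q i := by
    intro i
    have : q i ≤ ∑ i, q i := Finset.single_le_sum (fun i _ => hq i) (Finset.mem_univ i)
    linarith
  have hprod : ∏ i, ((1:ℝ) + q i) ≤ ((1:ℝ) + ∑ i, q i) ^ N := by
    calc ∏ i, ((1:ℝ) + q i) ≤ ∏ _i : Fin N, ((1:ℝ) + ∑ i, q i) :=
          Finset.prod_le_prod (fun i _ => by linarith [hq i]) (fun i _ => h1 i)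
      _ = ((1:ℝ) + ∑ i, q i) ^ N := by simp [Finset.prod_const]
  have hsum0 : (0:ℝ) ≤ ∑ i, q i := Finset.sum_nonneg fun i _ => hq i
  have hposS : (0:ℝ) < 1 + ∑ i, q i := by linarith
  have hposP : (0:ℝ) < ∏ i, ((1:ℝ) + q i) := Finset.prod_pos fun i _ => by linarith [hq i]
  have step : (((1:ℝ) + ∑ i, q i) ^ N) ^ (-(t/N)) ≤ (∏ i, ((1:ℝ) + q i)) ^ (-(t/N)) :=
    Real.rpow_le_rpow_of_nonpos hposP hprod (neg_nonpos.mpr (by positivity))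
  have e1 : (((1:ℝ) + ∑ i, q i) ^ N) ^ (-(t/N)) = ((1:ℝ) + ∑ i, q i) ^ (-t) := by
    rw [← Real.rpow_natCast ((1:ℝ) + ∑ i, q i) N, ← Real.rpow_mul hposS.le]
    congr 1
    field_simp
  have e2 : (∏ i, ((1:ℝ) + q i)) ^ (-(t/N)) = ∏ i, ((1:ℝ) + q i) ^ (-(t/N)) := by
    rw [← Real.finset_prod_rpow _ _ (fun i _ => by linarith [hq i])]
  rw [← e1, ← e2]
  exact step

lemma aux_lattice {N : ℕ} {t : ℝ} (ht : (N:ℝ)/2 < t) :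
    Summable fun x : Fin N → ℤ => ((1:ℝ) + ∑ i, ((x i:ℝ))^2) ^ (-t) := by
  rcases Nat.eq_zero_or_pos N with rfl | hN
  · haveI : Subsingleton (Fin 0 → ℤ) := ⟨fun a b => funext fun i => i.elim0⟩
    haveI : Finite (Fin 0 → ℤ) := Finite.of_subsingleton
    exact Summable.of_finite
  have hNpos : (0:ℝ) < N := by exact_mod_cast hN
  have ht0 : 0 ≤ t := le_trans (by positivity) ht.le
  have hc : 1/2 < t/N := by rw [lt_div_iff₀ hNpos]; nlinarith
  have hmaj := aux_prod (f := fun m : ℤ => ((1:ℝ) + (m:ℝ)^2) ^ (-(t/N)))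
    (aux_onedim hc) (fun m => Real.rpow_nonneg (by positivity) _) N
  refine Summable.of_nonneg_of_le (fun x => Real.rpow_nonneg (by positivity) _) (fun x => ?_) hmaj
  exact aux_bound hN (fun i => ((x i:ℝ))^2) (fun i => by positivity) ht0

noncomputable def vmap {n : ℕ} (k : Fin n → ℤ) : EuclideanSpace ℝ (Fin n) :=
  WithLp.toLp 2 (fun i => (k i : ℝ))

lemma znorm_eq_norm {n : ℕ} (k : Fin n → ℤ) : znorm k = ‖vmap k‖ := by
  rw [EuclideanSpace.norm_eq]
  unfold znorm vmap
  congr 1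
  apply Finset.sum_congr rfl
  intro i _
  rw [Real.norm_eq_abs, sq_abs]

lemma vmap_add {n : ℕ} (a b : Fin n → ℤ) : vmap (a + b) = vmap a + vmap b := by
  ext i
  show ((a i + b i : ℤ) : ℝ) = (a i : ℝ) + (b i : ℝ)
  push_cast; ring

lemma vmap_sum {n : ℕ} {ι : Type*} (s : Finset ι) (f : ι → Fin n → ℤ) :
    vmap (∑ a ∈ s, f a) = ∑ a ∈ s, vmap (f a) := by
  classical
  induction s using Finset.induction with
  | empty => ext i; simp [vmap]
  | @insert a s h ih =>
      rw [Finset.sum_insert h, Finset.sum_insert h, vmap_add, ih]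

lemma znorm_nonneg {n : ℕ} (k : Fin n → ℤ) : 0 ≤ znorm k := Real.sqrt_nonneg _

lemma znorm_sq {n : ℕ} (k : Fin n → ℤ) : znorm k ^ 2 = ∑ i, ((k i : ℝ)) ^ 2 := by
  unfold znorm
  rw [Real.sq_sqrt]
  positivity

lemma one_le_znorm {n : ℕ} {k : Fin n → ℤ} (hk : k ≠ 0) : 1 ≤ znorm k := by
  have : ∃ i, k i ≠ 0 := by
    by_contra h
    push_neg at h
    exact hk (funext fun i => h i)
  obtain ⟨i, hi⟩ := this
  have h1 : (1:ℝ) ≤ ((k i : ℝ))^2 := by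
    have := Int.one_le_abs hi
    have h2 : (1:ℝ) ≤ |(k i : ℝ)| := by
      calc (1:ℝ) ≤ ((|k i| : ℤ) : ℝ) := by exact_mod_cast this
        _ = |(k i : ℝ)| := by push_cast; ring
    nlinarith [sq_abs ((k i : ℝ)), sq_nonneg (|(k i:ℝ)| - 1)]
  have h2 : (1:ℝ) ≤ ∑ j, ((k j : ℝ))^2 :=
    le_trans h1 (Finset.single_le_sum (f := fun j => ((k j:ℝ))^2)
      (fun j _ => by positivity) (Finset.mem_univ i))
  calc (1:ℝ) = Real.sqrt 1 := by simp
    _ ≤ znorm k := Real.sqrt_le_sqrt h2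

lemma znorm_pos {n : ℕ} {k : Fin n → ℤ} (hk : k ≠ 0) : 0 < znorm k :=
  lt_of_lt_of_le one_pos (one_le_znorm hk)

lemma znorm_triangle {n : ℕ} (a b : Fin n → ℤ) : znorm (a + b) ≤ znorm a + znorm b := by
  rw [znorm_eq_norm, znorm_eq_norm, znorm_eq_norm, vmap_add]
  exact norm_add_le _ _

lemma znorm_sum_le {n : ℕ} {ι : Type*} (s : Finset ι) (f : ι → Fin n → ℤ) :
    znorm (∑ a ∈ s, f a) ≤ ∑ a ∈ s, znorm (f a) := by
  rw [znorm_eq_norm, vmap_sum]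
  calc ‖∑ a ∈ s, vmap (f a)‖ ≤ ∑ a ∈ s, ‖vmap (f a)‖ := norm_sum_le _ _
    _ = ∑ a ∈ s, znorm (f a) := by
        exact Finset.sum_congr rfl fun a _ => (znorm_eq_norm (f a)).symm

lemma abs_coord_le {n : ℕ} (k : Fin n → ℤ) (i : Fin n) : |((k i : ℤ) : ℝ)| ≤ znorm k := by
  rw [← Real.sqrt_sq_eq_abs]
  apply Real.sqrt_le_sqrt
  exact Finset.single_le_sum (f := fun j => ((k j : ℝ))^2) (fun j _ => by positivity)
    (Finset.mem_univ i)

lemma eval_abs_le {n j : ℕ} {Pj : MvPolynomial (Fin n) ℝ} (hPj : Pj.IsHomogeneous j)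
    (k : Fin n → ℤ) :
    |MvPolynomial.eval (fun i => ((k i : ℤ) : ℝ)) Pj|
      ≤ (∑ d ∈ Pj.support, |MvPolynomial.coeff d Pj|) * znorm k ^ j := by
  rw [MvPolynomial.eval_eq]
  calc |∑ d ∈ Pj.support, MvPolynomial.coeff d Pj * ∏ i ∈ d.support, ((k i : ℝ)) ^ d i|
      ≤ ∑ d ∈ Pj.support, |MvPolynomial.coeff d Pj * ∏ i ∈ d.support, ((k i : ℝ)) ^ d i| :=
        Finset.abs_sum_le_sum_abs _ _
    _ ≤ ∑ d ∈ Pj.support, |MvPolynomial.coeff d Pj| * znorm k ^ j := by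
        apply Finset.sum_le_sum
        intro d hd
        rw [abs_mul]
        apply mul_le_mul_of_nonneg_left _ (abs_nonneg _)
        calc |∏ i ∈ d.support, ((k i : ℝ)) ^ d i|
            ≤ ∏ i ∈ d.support, |(k i : ℝ)| ^ d i := by
              rw [Finset.abs_prod]
              apply Finset.prod_le_prod (fun i _ => abs_nonneg _)
              intro i _
              rw [abs_pow]
          _ ≤ ∏ i ∈ d.support, znorm k ^ d i :=
              Finset.prod_le_prod (fun i _ => by positivity)
                (fun i _ => pow_le_pow_left₀ (abs_nonneg _) (abs_coord_le k i) _)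
          _ = znorm k ^ (∑ i ∈ d.support, d i) := Finset.prod_pow_eq_pow_sum _ _ _
          _ = znorm k ^ j := by
              congr 1
              have hc : MvPolynomial.coeff d Pj ≠ 0 := by
                rwa [MvPolynomial.mem_support_iff] at hd
              have := hPj hc
              rw [Pi.one_def, ← Finsupp.degree_eq_weight_one] at this
              exact this
    _ = (∑ d ∈ Pj.support, |MvPolynomial.coeff d Pj|) * znorm k ^ j := by
        rw [← Finset.sum_mul]

lemma znorm_neg {n : ℕ} (k : Fin n → ℤ) : znorm (-k) = znorm k := by
  unfold znorm
  congr 1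
  apply Finset.sum_congr rfl
  intro i _
  rw [Pi.neg_apply]
  push_cast
  ring

lemma hker_bound {n p : ℕ} (b : (Fin p → Fin n → ℤ) → ℂ) (Pj : MvPolynomial (Fin n) ℝ)
    {j : ℕ} (hPj : Pj.IsHomogeneous j) (r : ℕ)
    (φ : (Fin n → ℤ) → (Fin p → Fin n → ℤ) → ℝ) (s : ℂ)
    (k : Fin n → ℤ) (l : Fin p → Fin n → ℤ) :
    ‖hker b Pj r φ s k l‖ ≤ (∑ d ∈ Pj.support, |MvPolynomial.coeff d Pj|) *
      ((if k = 0 then (0:ℝ) else znorm k ^ ((j:ℝ) - s.re - r - 2*p)) *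
       (‖b l‖ * ((1+p:ℝ)^(2*p) * (1 + ∑ i, znorm (l i)^2)^p))) := by
  set C := ∑ d ∈ Pj.support, |MvPolynomial.coeff d Pj| with hC
  have hC0 : 0 ≤ C := Finset.sum_nonneg fun d _ => abs_nonneg _
  set Q := ∑ i, znorm (l i)^2 with hQdef
  have hQ0 : 0 ≤ Q := Finset.sum_nonneg fun i _ => by positivity
  by_cases h : k = 0 ∨ ∃ i : Fin p, k + ∑ a ∈ Finset.Iic i, l a = 0
  · rw [hker, if_pos h, norm_zero]
    have h1 : 0 ≤ if k = 0 then (0:ℝ) else znorm k ^ ((j:ℝ) - s.re - r - 2*p) := by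
      split
      · exact le_refl 0
      · exact Real.rpow_nonneg (znorm_nonneg k) _
    exact mul_nonneg hC0 (mul_nonneg h1 (by positivity))
  · push_neg at h
    obtain ⟨hk, hki⟩ := h
    rw [if_neg hk]
    set x := znorm k with hxdef
    set y : Fin p → ℝ := fun i => znorm (k + ∑ a ∈ Finset.Iic i, l a) with hydef
    have hx1 : 1 ≤ x := one_le_znorm hk
    have hx0 : (0:ℝ) < x := lt_of_lt_of_le one_pos hx1
    have hy1 : ∀ i, 1 ≤ y i := fun i => one_le_znorm (hki i)
    have hy0 : ∀ i, (0:ℝ) < y i := fun i => lt_of_lt_of_le one_pos (hy1 i)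
    -- norm computation
    have hnorm : ‖hker b Pj r φ s k l‖
        = ‖b l‖ * |MvPolynomial.eval (fun i => ((k i : ℤ) : ℝ)) Pj|
          * (x ^ (s.re + (r:ℝ)))⁻¹ * ∏ i, ((y i)^2)⁻¹ := by
      rw [hker, if_neg (by push_neg; exact ⟨hk, hki⟩)]
      rw [norm_div, norm_mul, norm_mul]
      have he : ‖Complex.exp (Complex.I * ((φ k l : ℝ) : ℂ))‖ = 1 := by
        rw [Complex.norm_exp]
        simp [Complex.mul_re]
      have hX : ‖(x : ℂ) ^ (s + (r : ℂ))‖ = x ^ (s.re + (r:ℝ)) := by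
        rw [Complex.norm_cpow_eq_rpow_re_of_pos hx0]
        norm_num
      have hY : ‖∏ i : Fin p, (znorm (k + ∑ a ∈ Finset.Iic i, l a) : ℂ) ^ 2‖
          = ∏ i, (y i)^2 := by
        rw [norm_prod]
        apply Finset.prod_congr rfl
        intro i _
        rw [norm_pow, Complex.norm_real, Real.norm_eq_abs,
          abs_of_nonneg (znorm_nonneg _)]
      rw [norm_mul, he, hX, hY, Complex.norm_real, Real.norm_eq_abs, mul_one,
        div_eq_mul_inv, mul_inv, Finset.prod_inv_distrib]
      ring
    -- inverse bound for each factor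
    have hinv : ∀ i, ((y i)^2)⁻¹ ≤ ((1+p:ℝ)^2 * (1 + Q)) * (x^2)⁻¹ := by
      intro i
      have hsqQ : Real.sqrt (1 + Q) ^ 2 = 1 + Q := Real.sq_sqrt (by linarith)
      have h1s : (1:ℝ) ≤ Real.sqrt (1 + Q) := by
        nlinarith [Real.sq_sqrt (show (0:ℝ) ≤ 1 + Q by linarith),
          Real.sqrt_nonneg (1 + Q)]
      set z := znorm (∑ a ∈ Finset.Iic i, l a) with hz
      have hz0 : 0 ≤ z := znorm_nonneg _
      have hzle : z ≤ (p:ℝ) * Real.sqrt (1 + Q) := by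
        calc z ≤ ∑ a ∈ Finset.Iic i, znorm (l a) := znorm_sum_le _ _
          _ ≤ ∑ _a ∈ Finset.Iic i, Real.sqrt (1 + Q) := by
              apply Finset.sum_le_sum
              intro a _
              have h1 : znorm (l a) ^ 2 ≤ Q :=
                Finset.single_le_sum (f := fun i => znorm (l i)^2)
                  (fun i _ => by positivity) (Finset.mem_univ a)
              calc znorm (l a) = Real.sqrt (znorm (l a)^2) := by
                    rw [Real.sqrt_sq (znorm_nonneg _)]
                _ ≤ Real.sqrt (1 + Q) := Real.sqrt_le_sqrt (by linarith)
          _ = (Finset.Iic i).card * Real.sqrt (1 + Q) := by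
              rw [Finset.sum_const, nsmul_eq_mul]
          _ ≤ (p:ℝ) * Real.sqrt (1 + Q) := by
              apply mul_le_mul_of_nonneg_right _ (Real.sqrt_nonneg _)
              have : (Finset.Iic i).card ≤ p := by
                calc (Finset.Iic i).card ≤ (Finset.univ : Finset (Fin p)).card :=
                      Finset.card_le_card (Finset.subset_univ _)
                  _ = p := by simp
              exact_mod_cast this
      have hxy : x ≤ (1 + z) * y i := by
        have htri : x ≤ y i + z := by
          have hk_eq : k = (k + ∑ a ∈ Finset.Iic i, l a) + (-(∑ a ∈ Finset.Iic i, l a)) := by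
            ring
          calc x = znorm ((k + ∑ a ∈ Finset.Iic i, l a) + (-(∑ a ∈ Finset.Iic i, l a))) := by
                rw [hxdef]; exact congrArg znorm hk_eq
            _ ≤ y i + znorm (-(∑ a ∈ Finset.Iic i, l a)) := znorm_triangle _ _
            _ = y i + z := by rw [znorm_neg]
        nlinarith [hy1 i]
      have h1z : 1 + z ≤ (1+p:ℝ) * Real.sqrt (1 + Q) := by nlinarith
      have hx_le : x ≤ (1+p:ℝ) * Real.sqrt (1 + Q) * y i := by
        calc x ≤ (1 + z) * y i := hxy
          _ ≤ (1+p:ℝ) * Real.sqrt (1 + Q) * y i :=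
              mul_le_mul_of_nonneg_right h1z (le_of_lt (hy0 i))
      have hsq : x^2 ≤ ((1+p:ℝ)^2 * (1 + Q)) * (y i)^2 := by
        have := pow_le_pow_left₀ hx0.le hx_le 2
        calc x^2 ≤ ((1+p:ℝ) * Real.sqrt (1 + Q) * y i)^2 := this
          _ = ((1+p:ℝ)^2 * (1 + Q)) * (y i)^2 := by
              rw [mul_pow, mul_pow, hsqQ]
      have hx2 : (0:ℝ) < x^2 := pow_pos hx0 2
      have hy2 : (0:ℝ) < (y i)^2 := pow_pos (hy0 i) 2
      rw [← div_eq_mul_inv, le_div_iff₀ hx2, inv_mul_eq_div, div_le_iff₀ hy2]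
      linarith
    -- main chain
    calc ‖hker b Pj r φ s k l‖
        = ‖b l‖ * |MvPolynomial.eval (fun i => ((k i : ℤ) : ℝ)) Pj|
          * (x ^ (s.re + (r:ℝ)))⁻¹ * ∏ i, ((y i)^2)⁻¹ := hnorm
      _ ≤ ‖b l‖ * (C * x^j) * (x ^ (s.re + (r:ℝ)))⁻¹
          * ∏ _i : Fin p, (((1+p:ℝ)^2 * (1 + Q)) * (x^2)⁻¹) := by
          have hIn : (0:ℝ) ≤ (x ^ (s.re + (r:ℝ)))⁻¹ :=
            inv_nonneg.mpr (Real.rpow_nonneg hx0.le _)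
          have hE : ‖b l‖ * |MvPolynomial.eval (fun i => ((k i : ℤ) : ℝ)) Pj|
              ≤ ‖b l‖ * (C * x^j) :=
            mul_le_mul_of_nonneg_left (eval_abs_le hPj k) (norm_nonneg _)
          have hP : ∏ i, ((y i)^2)⁻¹
              ≤ ∏ _i : Fin p, (((1+p:ℝ)^2 * (1 + Q)) * (x^2)⁻¹) :=
            Finset.prod_le_prod (fun i _ => inv_nonneg.mpr (sq_nonneg _))
              (fun i _ => hinv i)
          refine mul_le_mul (mul_le_mul_of_nonneg_right hE hIn) hP
            (Finset.prod_nonneg fun i _ => inv_nonneg.mpr (sq_nonneg _))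
            (mul_nonneg (mul_nonneg (norm_nonneg _)
              (mul_nonneg hC0 (pow_nonneg hx0.le j))) hIn)
      _ = C * (x ^ ((j:ℝ) - s.re - r - 2*p) * (‖b l‖ * ((1+p:ℝ)^(2*p) * (1 + Q)^p))) := by
          rw [Finset.prod_const, Finset.card_univ, Fintype.card_fin]
          have hxpow : x^(j:ℕ) * (x ^ (s.re+(r:ℝ)))⁻¹ * ((x^2)⁻¹)^p
              = x ^ ((j:ℝ) - s.re - r - 2*p) := by
            rw [← Real.rpow_natCast x j, ← Real.rpow_neg hx0.le, inv_pow, ← pow_mul,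
              ← Real.rpow_natCast x (2*p), ← Real.rpow_neg hx0.le,
              ← Real.rpow_add hx0, ← Real.rpow_add hx0]
            congr 1
            push_cast
            ring
          have hKpow : (((1+p:ℝ)^2 * (1 + Q)) * (x^2)⁻¹)^p
              = (1+p:ℝ)^(2*p) * (1 + Q)^p * ((x^2)⁻¹)^p := by
            rw [mul_pow, mul_pow, ← pow_mul]
          rw [hKpow]
          linear_combination (‖b l‖ * C * (1+p:ℝ)^(2*p) * (1 + Q)^p) * hxpow

lemma g_summable {n : ℕ} {t : ℝ} (ht : (n:ℝ) < t) :
    Summable fun k : Fin n → ℤ => if k = 0 then (0:ℝ) else znorm k ^ (-t) := by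
  have ht0 : (0:ℝ) ≤ t := le_trans (Nat.cast_nonneg n) ht.le
  have ht2 : (n:ℝ)/2 < t/2 := by linarith
  have hmaj := (aux_lattice (N := n) ht2).mul_left ((2:ℝ) ^ (t/2))
  refine Summable.of_nonneg_of_le ?_ (fun k => ?_) hmaj
  · intro k
    split
    · exact le_refl 0
    · exact Real.rpow_nonneg (znorm_nonneg _) _
  · by_cases hk : k = 0
    · rw [if_pos hk]
      positivity
    · rw [if_neg hk]
      have hzS : znorm k = Real.sqrt (∑ i, ((k i:ℝ))^2) := rfl
      set S := ∑ i, ((k i:ℝ))^2 with hSdef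
      have hS0 : (0:ℝ) ≤ S := Finset.sum_nonneg fun i _ => by positivity
      have hS1 : (1:ℝ) ≤ S := by
        have h1 := one_le_znorm hk
        rw [hzS] at h1
        nlinarith [Real.sq_sqrt hS0, Real.sqrt_nonneg S]
      have heq : znorm k ^ (-t) = S ^ (-(t/2)) := by
        rw [hzS, Real.sqrt_eq_rpow, ← Real.rpow_mul hS0]
        congr 1
        ring
      rw [heq]
      have h2S : 1 + S ≤ 2 * S := by linarith
      have ht20 : 0 ≤ t/2 := by linarith
      have key : (1+S) ^ (t/2) ≤ 2 ^ (t/2) * S ^ (t/2) := by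
        calc (1+S) ^ (t/2) ≤ (2*S) ^ (t/2) :=
              Real.rpow_le_rpow (by linarith) h2S ht20
          _ = 2 ^ (t/2) * S ^ (t/2) := Real.mul_rpow (by norm_num) hS0
      have hSp : 0 < S ^ (t/2) := Real.rpow_pos_of_pos (by linarith) _
      have h1Sp : 0 < (1+S) ^ (t/2) := Real.rpow_pos_of_pos (by linarith) _
      rw [Real.rpow_neg hS0, Real.rpow_neg (by linarith : (0:ℝ) ≤ 1+S)]
      rw [← div_eq_mul_inv, le_div_iff₀ h1Sp, inv_mul_eq_div, div_le_iff₀ hSp]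
      linarith

lemma w_summable' {n p : ℕ} {t : ℝ} (ht : ((n:ℝ)*p)/2 < t) :
    Summable fun l : Fin p → Fin n → ℤ => ((1:ℝ) + ∑ i, znorm (l i)^2) ^ (-t) := by
  rcases Nat.eq_zero_or_pos p with rfl | hp
  · haveI : Subsingleton (Fin 0 → Fin n → ℤ) := ⟨fun a b => funext fun i => i.elim0⟩
    haveI : Finite (Fin 0 → Fin n → ℤ) := Finite.of_subsingleton
    exact Summable.of_finite
  have hppos : (0:ℝ) < p := by exact_mod_cast hp
  have ht0 : (0:ℝ) ≤ t := le_trans (by positivity) ht.le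
  have hc : (n:ℝ)/2 < t/p := by
    rw [lt_div_iff₀ hppos]
    nlinarith
  have hf := aux_lattice (N := n) hc
  have hmaj := aux_prod (f := fun x : Fin n → ℤ => ((1:ℝ) + ∑ i, ((x i:ℝ))^2) ^ (-(t/p)))
    hf (fun x => Real.rpow_nonneg (by positivity) _) p
  refine Summable.of_nonneg_of_le (fun l => Real.rpow_nonneg (by positivity) _)
    (fun l => ?_) hmaj
  have hb := aux_bound hp (fun i => znorm (l i)^2) (fun i => by positivity) ht0
  calc ((1:ℝ) + ∑ i, znorm (l i)^2) ^ (-t)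
      ≤ ∏ i, ((1:ℝ) + znorm (l i)^2) ^ (-(t/p)) := hb
    _ = ∏ i, ((1:ℝ) + ∑ a, ((l i a:ℝ))^2) ^ (-(t/p)) := by
        apply Finset.prod_congr rfl
        intro i _
        rw [znorm_sq]

lemma aux_interchange {K L : Type*} (f : K → L → ℂ)
    (hsum : Summable (fun kl : K × L => f kl.1 kl.2)) :
    (∑' k, ∑' l, f k l) = ∑' l, ∑' k, f k l := by
  have h1 : ∀ k, Summable fun l => f k l := fun k => hsum.prod_factor k
  have h2 : ∀ l, Summable fun k => f k l := fun l => hsum.prod_symm.prod_factor l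
  exact (Summable.tsum_comm' hsum h1 h2).symm

set_option maxHeartbeats 1000000 in
/-- for a Schwartz sequence `b`, a homogeneous polynomial `P_j` of degree
`j`, `r ∈ ℕ` and a real phase `φ`, the double series `Σ'_{(k,l)} h(s,k,l)` is absolutely
summable whenever `Re s > n + j − r − 2p`; in particular the sums over `k` and `l` can
be interchanged. -/
theorem stmt10 {n p : ℕ} (b : (Fin p → Fin n → ℤ) → ℂ)
    (hb : ∀ m : ℕ, ∃ B : ℝ, ∀ l : Fin p → Fin n → ℤ,
        (1 + ∑ i, znorm (l i) ^ 2) ^ m * ‖b l‖ ^ 2 ≤ B)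
    (j : ℕ) (Pj : MvPolynomial (Fin n) ℝ) (hPj : Pj.IsHomogeneous j)
    (r : ℕ) (φ : (Fin n → ℤ) → (Fin p → Fin n → ℤ) → ℝ)
    (s : ℂ) (hs : (n : ℝ) + j - r - 2 * p < s.re) :
    Summable (fun kl : (Fin n → ℤ) × (Fin p → Fin n → ℤ) =>
        ‖hker b Pj r φ s kl.1 kl.2‖) ∧
    (∑' k : Fin n → ℤ, ∑' l : Fin p → Fin n → ℤ, hker b Pj r φ s k l)
      = ∑' l : Fin p → Fin n → ℤ, ∑' k : Fin n → ℤ, hker b Pj r φ s k l := by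
  set C := ∑ d ∈ Pj.support, |MvPolynomial.coeff d Pj| with hCdef
  have hC0 : 0 ≤ C := Finset.sum_nonneg fun d _ => abs_nonneg _
  -- k-side summability
  have ht : (n:ℝ) < s.re + r + 2*p - j := by linarith
  have hg0 := g_summable (n := n) ht
  have hg : Summable fun k : Fin n → ℤ =>
      if k = 0 then (0:ℝ) else znorm k ^ ((j:ℝ) - s.re - r - 2*p) := by
    refine hg0.congr fun k => ?_
    by_cases hk : k = 0
    · simp [hk]
    · rw [if_neg hk, if_neg hk]
      congr 1
      ring
  have hgnn : ∀ k : Fin n → ℤ,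
      0 ≤ if k = 0 then (0:ℝ) else znorm k ^ ((j:ℝ) - s.re - r - 2*p) := by
    intro k
    split
    · exact le_refl 0
    · exact Real.rpow_nonneg (znorm_nonneg _) _
  -- l-side summability
  obtain ⟨B, hB⟩ := hb (2*p + 2*(n*p+1))
  have hB0 : 0 ≤ B := le_trans (by positivity) (hB 0)
  have hwm : Summable fun l : Fin p → Fin n → ℤ =>
      Real.sqrt B * ((1:ℝ) + ∑ i, znorm (l i)^2) ^ (-((n*p+1 : ℕ):ℝ)) := by
    refine Summable.mul_left _ (w_summable' ?_)
    push_cast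
    have h0 : (0:ℝ) ≤ (n:ℝ) * p := by positivity
    linarith
  have hw' : Summable fun l : Fin p → Fin n → ℤ =>
      ‖b l‖ * ((1:ℝ) + ∑ i, znorm (l i)^2)^p := by
    refine Summable.of_nonneg_of_le
      (fun l => mul_nonneg (norm_nonneg _) (by positivity)) (fun l => ?_) hwm
    set Q := ∑ i, znorm (l i)^2 with hQdef
    have hQ0 : (0:ℝ) ≤ Q := Finset.sum_nonneg fun i _ => by positivity
    have h1Q : (0:ℝ) < 1 + Q := by linarith
    set m : ℕ := 2*p + 2*(n*p+1) with hmdef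
    have hbl : ‖b l‖ ≤ Real.sqrt B * (1+Q) ^ (-((m:ℝ)/2)) := by
      have hsq : ‖b l‖^2 ≤ B * (1+Q) ^ (-(m:ℝ)) := by
        have h1 := hB l
        have h2 : ((1+Q)^m)⁻¹ = (1+Q) ^ (-(m:ℝ)) := by
          rw [← Real.rpow_natCast (1+Q) m, ← Real.rpow_neg h1Q.le]
        have h3 : (0:ℝ) < (1+Q)^m := pow_pos h1Q m
        rw [← h2, ← div_eq_mul_inv, le_div_iff₀ h3]
        linarith
      calc ‖b l‖ = Real.sqrt (‖b l‖^2) := (Real.sqrt_sq (norm_nonneg _)).symm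
        _ ≤ Real.sqrt (B * (1+Q) ^ (-(m:ℝ))) := Real.sqrt_le_sqrt hsq
        _ = Real.sqrt B * Real.sqrt ((1+Q) ^ (-(m:ℝ))) := Real.sqrt_mul hB0 _
        _ = Real.sqrt B * (1+Q) ^ (-((m:ℝ)/2)) := by
            congr 1
            rw [Real.sqrt_eq_rpow, ← Real.rpow_mul h1Q.le]
            congr 1
            ring
    calc ‖b l‖ * ((1:ℝ)+Q)^p ≤ (Real.sqrt B * (1+Q) ^ (-((m:ℝ)/2))) * (1+Q)^p :=
          mul_le_mul_of_nonneg_right hbl (by positivity)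
      _ = Real.sqrt B * ((1:ℝ)+Q) ^ (-((n*p+1 : ℕ):ℝ)) := by
          rw [mul_assoc]
          congr 1
          rw [← Real.rpow_natCast (1+Q) p, ← Real.rpow_add h1Q]
          congr 1
          rw [hmdef]
          push_cast
          ring
  have hw : Summable fun l : Fin p → Fin n → ℤ =>
      ‖b l‖ * ((1+p:ℝ)^(2*p) * ((1:ℝ) + ∑ i, znorm (l i)^2)^p) := by
    refine (hw'.mul_left ((1+p:ℝ)^(2*p))).congr fun l => ?_
    ring
  have hwnn : ∀ l : Fin p → Fin n → ℤ,
      0 ≤ ‖b l‖ * ((1+p:ℝ)^(2*p) * ((1:ℝ) + ∑ i, znorm (l i)^2)^p) :=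
    fun l => mul_nonneg (norm_nonneg _) (by positivity)
  -- assemble
  have hprod : Summable fun kl : (Fin n → ℤ) × (Fin p → Fin n → ℤ) =>
      (if kl.1 = 0 then (0:ℝ) else znorm kl.1 ^ ((j:ℝ) - s.re - r - 2*p)) *
      (‖b kl.2‖ * ((1+p:ℝ)^(2*p) * ((1:ℝ) + ∑ i, znorm (kl.2 i)^2)^p)) :=
    Summable.mul_of_nonneg
      (f := fun k : Fin n → ℤ =>
        if k = 0 then (0:ℝ) else znorm k ^ ((j:ℝ) - s.re - r - 2*p))
      (g := fun l : Fin p → Fin n → ℤ =>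
        ‖b l‖ * ((1+p:ℝ)^(2*p) * ((1:ℝ) + ∑ i, znorm (l i)^2)^p))
      hg hw hgnn hwnn
  have hnormsum : Summable (fun kl : (Fin n → ℤ) × (Fin p → Fin n → ℤ) =>
      ‖hker b Pj r φ s kl.1 kl.2‖) := by
    refine Summable.of_nonneg_of_le (fun kl => norm_nonneg _)
      (fun kl => ?_) (hprod.mul_left C)
    exact hker_bound b Pj hPj r φ s kl.1 kl.2
  refine ⟨hnormsum, ?_⟩
  exact aux_interchange (fun k l => hker b Pj r φ s k l) hnormsum.of_norm
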